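/- Suppose Q ∈ C¹([0,T)×[0,1]) and N : [0,T) → (0,∞) satisfy ∂_τQ(τ,η) + ∂_ηQ(τ,η) = 1/N(τ) + K(Q(τ,η)) for τ ∈ (0,T), η ∈ (0,1), and Q(τ,0) = 0 for τ ∈ [0,T), with initial datum Q(0,·) = Q_init nondecreasing on [0,1]. Then (i) for every τ ∈ [0,T) the function η ↦ Q(τ,η) is nondecreasing on [0,1], and (ii) ∂_ηQ(τ,0) = 1/N(τ) + K(0) for all τ ∈ [0,T). If in addition 1/N(τ) = ∂_ηQ(τ,1) − K(Φ_F) holds for all τ ∈ [0,T), then ∂_ηQ(τ,1) − ∂_ηQ(τ,0) = K(Φ_F) − K(0) for all τ ∈ [0,T). -/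

import Mathlib

open Real Set MeasureTheory Filter Topology
open scoped ENNReal

noncomputable section

/-- The time interval `[0, T)` in `ℝ`, where `T : ℝ≥0∞` may be `∞`. -/
def Ico0 (T : ℝ≥0∞) : Set ℝ := {τ : ℝ | 0 ≤ τ ∧ ENNReal.ofReal τ < T}

/-- Partial derivative in the time variable (one-sided at `τ = 0`). -/
def pdTau (Q : ℝ → ℝ → ℝ) (τ η : ℝ) : ℝ := derivWithin (fun s => Q s η) (Ici 0) τ

/-- Partial derivative in the spatial variable (one-sided at `η = 0` and `η = 1`). -/
def pdEta (Q : ℝ → ℝ → ℝ) (τ η : ℝ) : ℝ := derivWithin (fun x => Q τ x) (Icc 0 1) η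

/-- Assumption 1.1: `K ∈ C²(ℝ)` with `K'`, `K''` bounded on `ℝ` and `K > 0` on `[0, Φ_F]`. -/
structure KAssump (K : ℝ → ℝ) (ΦF : ℝ) : Prop where
  smooth : ContDiff ℝ 2 K
  bdd1 : ∃ C : ℝ, ∀ x : ℝ, |deriv K x| ≤ C
  bdd2 : ∃ C : ℝ, ∀ x : ℝ, |deriv (deriv K) x| ≤ C
  pos : ∀ φ ∈ Icc (0 : ℝ) ΦF, 0 < K φ

/-- `k_min := K'(0) + ∫₀^{Φ_F} min(K''(φ), 0) dφ`. -/
def kmin (K : ℝ → ℝ) (ΦF : ℝ) : ℝ :=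
  deriv K 0 + ∫ φ in (0 : ℝ)..ΦF, min (deriv (deriv K) φ) 0

/-- `k_max := K'(0) + ∫₀^{Φ_F} max(K''(φ), 0) dφ`. -/
def kmax (K : ℝ → ℝ) (ΦF : ℝ) : ℝ :=
  deriv K 0 + ∫ φ in (0 : ℝ)..ΦF, max (deriv (deriv K) φ) 0

/-- Assumption (A2) on the initial datum. -/
structure A2 (K : ℝ → ℝ) (ΦF : ℝ) (Qinit : ℝ → ℝ) : Prop where
  reg : ContDiffOn ℝ 1 Qinit (Icc 0 1)
  mono : MonotoneOn Qinit (Icc 0 1)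
  init0 : Qinit 0 = 0
  init1 : Qinit 1 = ΦF
  deriv1 : K ΦF < derivWithin Qinit (Icc 0 1) 1
  compat : derivWithin Qinit (Icc 0 1) 1 - derivWithin Qinit (Icc 0 1) 0 = K ΦF - K 0

/-- A classical solution `(Q, N)` of the Q-system on `[0, T)` with initial datum `Qinit`. -/
structure IsQSol (K : ℝ → ℝ) (ΦF : ℝ) (T : ℝ≥0∞) (Qinit : ℝ → ℝ)
    (Q : ℝ → ℝ → ℝ) (N : ℝ → ℝ) : Prop where
  initReg : ContDiffOn ℝ 1 Qinit (Icc 0 1)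
  initMono : MonotoneOn Qinit (Icc 0 1)
  init0 : Qinit 0 = 0
  init1 : Qinit 1 = ΦF
  initDeriv : K ΦF < derivWithin Qinit (Icc 0 1) 1
  reg : ContDiffOn ℝ 1 (Function.uncurry Q) (Ico0 T ×ˢ Icc (0 : ℝ) 1)
  mono : ∀ τ ∈ Ico0 T, MonotoneOn (Q τ) (Icc 0 1)
  Ncont : ContinuousOn N (Ico0 T)
  Npos : ∀ τ ∈ Ico0 T, 0 < N τ
  pde : ∀ τ ∈ Ico0 T, ∀ η ∈ Ioo (0 : ℝ) 1,
    pdTau Q τ η + pdEta Q τ η = 1 / N τ + K (Q τ η)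
  bc : ∀ τ ∈ Ico0 T, Q τ 0 = 0
  Ndef : ∀ τ ∈ Ico0 T, 1 / N τ = pdEta Q τ 1 - K ΦF
  init : ∀ η ∈ Icc (0 : ℝ) 1, Q 0 η = Qinit η
  constraint : ∀ τ ∈ Ico0 T, K ΦF < pdEta Q τ 1

/-- A classical solution `(Q, Ñ)` of the relaxed system on `[0, T)` with initial datum `Qinit`,
where `Ñ` is unconstrained in sign. -/
structure IsRelaxedSol (K : ℝ → ℝ) (ΦF : ℝ) (T : ℝ≥0∞) (Qinit : ℝ → ℝ)
    (Q : ℝ → ℝ → ℝ) (Ntil : ℝ → ℝ) : Prop where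
  initReg : ContDiffOn ℝ 1 Qinit (Icc 0 1)
  init0 : Qinit 0 = 0
  init1 : Qinit 1 = ΦF
  reg : ContDiffOn ℝ 1 (Function.uncurry Q) (Ico0 T ×ˢ Icc (0 : ℝ) 1)
  Ncont : ContinuousOn Ntil (Ico0 T)
  pde : ∀ τ ∈ Ico0 T, ∀ η ∈ Ioo (0 : ℝ) 1,
    pdTau Q τ η + pdEta Q τ η = Ntil τ + K (Q τ η)
  bc : ∀ τ ∈ Ico0 T, Q τ 0 = 0
  Ndef : ∀ τ ∈ Ico0 T, Ntil τ = pdEta Q τ 1 - K ΦF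
  init : ∀ η ∈ Icc (0 : ℝ) 1, Q 0 η = Qinit η

/-- A steady state `(Q*, N*)` of the Q-system. -/
def IsSteadyState (K : ℝ → ℝ) (ΦF : ℝ) (Qs : ℝ → ℝ) (Ns : ℝ) : Prop :=
  ContDiffOn ℝ 1 Qs (Icc 0 1) ∧ 0 < Ns ∧
    (∀ η ∈ Icc (0 : ℝ) 1, derivWithin Qs (Icc 0 1) η = K (Qs η) + 1 / Ns) ∧
    Qs 0 = 0 ∧ Qs 1 = ΦF

/-- `P₀ f := f - ∫₀¹ f`. -/
def P0 (f : ℝ → ℝ) (η : ℝ) : ℝ := f η - ∫ x in (0 : ℝ)..1, f x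

/-- `H_init := Q_init' - K ∘ Q_init` (derivative within `[0,1]`). -/
def Hinit (K : ℝ → ℝ) (Qinit : ℝ → ℝ) (η : ℝ) : ℝ :=
  derivWithin Qinit (Icc 0 1) η - K (Qinit η)

/-! ### Auxiliary lemmas for Proposition 2.1 -/

lemma aux_mem_Ico0_of_le {T : ℝ≥0∞} {τ s : ℝ} (hτ : τ ∈ Ico0 T) (h0 : 0 ≤ s) (hs : s ≤ τ) :
    s ∈ Ico0 T :=
  ⟨h0, lt_of_le_of_lt (ENNReal.ofReal_le_ofReal hs) hτ.2⟩

lemma aux_Ico0_top : Ico0 ⊤ = Ici (0 : ℝ) := by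
  ext τ; simp [Ico0]

lemma aux_Ico0_ne_top {T : ℝ≥0∞} (hT : T ≠ ⊤) : Ico0 T = Ico (0 : ℝ) T.toReal := by
  ext τ
  simp only [Ico0, mem_setOf_eq, mem_Ico]
  exact and_congr_right fun h0 => ENNReal.ofReal_lt_iff_lt_toReal h0 hT

lemma aux_uniqueDiffOn_Ico0 (T : ℝ≥0∞) : UniqueDiffOn ℝ (Ico0 T) := by
  rcases eq_or_ne T ⊤ with rfl | hT
  · rw [aux_Ico0_top]; exact uniqueDiffOn_Ici 0
  · rw [aux_Ico0_ne_top hT]; exact uniqueDiffOn_Ico 0 T.toReal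

lemma aux_Ico0_mem_nhdsWithin {T : ℝ≥0∞} {τ : ℝ} (hτ : τ ∈ Ico0 T) :
    Ico0 T ∈ 𝓝[Ici (0 : ℝ)] τ := by
  rcases eq_or_ne T ⊤ with rfl | hT
  · rw [aux_Ico0_top]; exact self_mem_nhdsWithin
  · rw [aux_Ico0_ne_top hT]
    have hlt : τ < T.toReal := (ENNReal.ofReal_lt_iff_lt_toReal hτ.1 hT).mp hτ.2
    have : Ico (0 : ℝ) T.toReal = Ici (0 : ℝ) ∩ Iio T.toReal := (Ici_inter_Iio).symm
    rw [this]
    exact Filter.inter_mem self_mem_nhdsWithin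
      (mem_nhdsWithin_of_mem_nhds (Iio_mem_nhds hlt))

/-- Extraction of a "last nonnegative point" for a continuous function. -/
lemma aux_last_zero {f : ℝ → ℝ} {a b : ℝ} (hab : a ≤ b) (hc : ContinuousOn f (Icc a b))
    (ha : 0 ≤ f a) (hb : f b < 0) :
    ∃ s ∈ Ico a b, f s = 0 ∧ ∀ u ∈ Ioc s b, f u < 0 := by
  set A : Set ℝ := Icc a b ∩ f ⁻¹' Ici 0 with hA
  have hAc : IsClosed A := hc.preimage_isClosed_of_isClosed isClosed_Icc isClosed_Ici
  have hAne : A.Nonempty := ⟨a, ⟨left_mem_Icc.mpr hab, ha⟩⟩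
  have hAbdd : BddAbove A := (bddAbove_Icc (a := a) (b := b)).mono (inter_subset_left)
  set s := sSup A with hsdef
  have hsA : s ∈ A := hAc.csSup_mem hAne hAbdd
  have hsb : s ≤ b := hsA.1.2
  have hsblt : s < b := lt_of_le_of_ne hsb (by intro h; rw [h] at hsA; exact absurd hsA.2 (not_le.mpr hb))
  have hneg : ∀ u ∈ Ioc s b, f u < 0 := by
    intro u hu
    by_contra h
    push_neg at h
    exact absurd (le_csSup hAbdd ⟨⟨hsA.1.1.trans hu.1.le, hu.2⟩, h⟩) (not_le.mpr hu.1)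
  refine ⟨s, ⟨hsA.1.1, hsblt⟩, ?_, hneg⟩
  have hnb : (𝓝[Ioc s b] s).NeBot := by
    rw [← mem_closure_iff_nhdsWithin_neBot, closure_Ioc hsblt.ne]
    exact left_mem_Icc.mpr hsb
  have ht : Tendsto f (𝓝[Ioc s b] s) (𝓝 (f s)) :=
    ((hc s hsA.1).mono (fun u hu => ⟨hsA.1.1.trans hu.1.le, hu.2⟩))
  have hle : f s ≤ 0 :=
    le_of_tendsto ht (Filter.eventually_of_mem self_mem_nhdsWithin fun u hu => (hneg u hu).le)
  exact le_antisymm hle hsA.2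

/-- Proposition 2.1: preservation of monotonicity and the hidden boundary conditions. -/
theorem stmt0 (ΦF : ℝ) (hΦF : 0 < ΦF) (K : ℝ → ℝ) (hK : KAssump K ΦF)
    (T : ℝ≥0∞) (hT : 0 < T) (Qinit : ℝ → ℝ) (Q : ℝ → ℝ → ℝ) (N : ℝ → ℝ)
    (hreg : ContDiffOn ℝ 1 (Function.uncurry Q) (Ico0 T ×ˢ Icc (0 : ℝ) 1))
    (hNpos : ∀ τ ∈ Ico0 T, 0 < N τ)
    (hpde : ∀ τ ∈ Ico0 T, ∀ η ∈ Ioo (0 : ℝ) 1,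
      pdTau Q τ η + pdEta Q τ η = 1 / N τ + K (Q τ η))
    (hbc : ∀ τ ∈ Ico0 T, Q τ 0 = 0)
    (hinit : ∀ η ∈ Icc (0 : ℝ) 1, Q 0 η = Qinit η)
    (hmono : MonotoneOn Qinit (Icc 0 1)) :
    (∀ τ ∈ Ico0 T, MonotoneOn (Q τ) (Icc 0 1)) ∧
      (∀ τ ∈ Ico0 T, pdEta Q τ 0 = 1 / N τ + K 0) ∧
      ((∀ τ ∈ Ico0 T, 1 / N τ = pdEta Q τ 1 - K ΦF) →
        ∀ τ ∈ Ico0 T, pdEta Q τ 1 - pdEta Q τ 0 = K ΦF - K 0) := by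
  classical
  set S : Set (ℝ × ℝ) := Ico0 T ×ˢ Icc (0 : ℝ) 1 with hSdef
  have hUDS : UniqueDiffOn ℝ S := (aux_uniqueDiffOn_Ico0 T).prod (uniqueDiffOn_Icc one_pos)
  set F : ℝ × ℝ → (ℝ × ℝ →L[ℝ] ℝ) := fderivWithin ℝ (Function.uncurry Q) S with hFdef
  have hQdiff : ∀ p ∈ S, HasFDerivWithinAt (Function.uncurry Q) (F p) S p := fun p hp =>
    ((hreg.differentiableOn one_ne_zero) p hp).hasFDerivWithinAt
  have h0T : (0 : ℝ) ∈ Ico0 T := ⟨le_refl 0, by simpa [ENNReal.ofReal_zero] using hT⟩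
  -- identification of the spatial partial derivative
  have hEta : ∀ τ ∈ Ico0 T, ∀ η ∈ Icc (0 : ℝ) 1, pdEta Q τ η = F (τ, η) (0, 1) := by
    intro τ hτ η hη
    have hmap : MapsTo (fun x : ℝ => (τ, x)) (Icc (0 : ℝ) 1) S := fun x hx => ⟨hτ, hx⟩
    have hline : HasDerivWithinAt (fun x : ℝ => (τ, x)) ((0 : ℝ), (1 : ℝ)) (Icc (0 : ℝ) 1) η :=
      HasDerivWithinAt.prodMk (hasDerivWithinAt_const _ _ τ) (hasDerivWithinAt_id _ _)
    have h1 := (hQdiff (τ, η) ⟨hτ, hη⟩).comp_hasDerivWithinAt η hline hmap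
    exact h1.derivWithin (uniqueDiffOn_Icc one_pos η hη)
  -- identification of the time partial derivative
  have hTau : ∀ τ ∈ Ico0 T, ∀ η ∈ Icc (0 : ℝ) 1, pdTau Q τ η = F (τ, η) (1, 0) := by
    intro τ hτ η hη
    have hmap : MapsTo (fun s : ℝ => (s, η)) (Ico0 T) S := fun s hs => ⟨hs, hη⟩
    have hline : HasDerivWithinAt (fun s : ℝ => (s, η)) ((1 : ℝ), (0 : ℝ)) (Ico0 T) τ :=
      HasDerivWithinAt.prodMk (hasDerivWithinAt_id _ _) (hasDerivWithinAt_const _ _ η)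
    have h1 := (hQdiff (τ, η) ⟨hτ, hη⟩).comp_hasDerivWithinAt τ hline hmap
    have h2 : HasDerivWithinAt (fun s => Q s η) (F (τ, η) (1, 0)) (Ici 0) τ :=
      h1.mono_of_mem_nhdsWithin (aux_Ico0_mem_nhdsWithin hτ)
    exact h2.derivWithin (uniqueDiffOn_Ici 0 τ hτ.1)
  -- the PDE extends to the closed interval (via continuity of the derivative)
  have hFcont : ContinuousOn F S := hreg.continuousOn_fderivWithin hUDS le_rfl
  have hQcont : ContinuousOn (Function.uncurry Q) S := hreg.continuousOn
  have key : ∀ τ ∈ Ico0 T, ∀ η ∈ Icc (0 : ℝ) 1,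
      F (τ, η) (1, 0) + F (τ, η) (0, 1) = 1 / N τ + K (Q τ η) := by
    intro τ hτ η hη
    set G : ℝ → ℝ := fun x => F (τ, x) (1, 0) + F (τ, x) (0, 1) with hGdef
    set H : ℝ → ℝ := fun x => 1 / N τ + K (Q τ x) with hHdef
    have hslice : ContinuousOn (fun x : ℝ => ((τ, x) : ℝ × ℝ)) (Icc (0 : ℝ) 1) :=
      (continuous_const.prodMk continuous_id).continuousOn
    have hmap : MapsTo (fun x : ℝ => ((τ, x) : ℝ × ℝ)) (Icc (0 : ℝ) 1) S := fun x hx => ⟨hτ, hx⟩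
    have hGc : ContinuousOn G (Icc (0 : ℝ) 1) := by
      have hF1 : ContinuousOn (fun x : ℝ => F (τ, x)) (Icc (0 : ℝ) 1) :=
        hFcont.comp hslice hmap
      exact ((ContinuousLinearMap.apply ℝ ℝ ((1 : ℝ), (0 : ℝ))).continuous.comp_continuousOn
        hF1).add ((ContinuousLinearMap.apply ℝ ℝ ((0 : ℝ), (1 : ℝ))).continuous.comp_continuousOn
        hF1)
    have hHc : ContinuousOn H (Icc (0 : ℝ) 1) := by
      have : ContinuousOn (fun x : ℝ => Q τ x) (Icc (0 : ℝ) 1) := hQcont.comp hslice hmap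
      exact continuousOn_const.add (hK.smooth.continuous.comp_continuousOn this)
    have heq : EqOn G H (Ioo (0 : ℝ) 1) := by
      intro x hx
      have hx' : x ∈ Icc (0 : ℝ) 1 := Ioo_subset_Icc_self hx
      have := hpde τ hτ x hx
      rwa [hTau τ hτ x hx', hEta τ hτ x hx'] at this
    have hnb : (𝓝[Ioo (0 : ℝ) 1] η).NeBot := by
      rw [← mem_closure_iff_nhdsWithin_neBot, closure_Ioo one_ne_zero.symm]
      exact hη
    have h1 : Tendsto G (𝓝[Ioo (0 : ℝ) 1] η) (𝓝 (G η)) :=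
      ((hGc η hη).mono Ioo_subset_Icc_self)
    have h2 : Tendsto H (𝓝[Ioo (0 : ℝ) 1] η) (𝓝 (H η)) :=
      ((hHc η hη).mono Ioo_subset_Icc_self)
    have h1' : Tendsto H (𝓝[Ioo (0 : ℝ) 1] η) (𝓝 (G η)) :=
      h1.congr' (Filter.eventually_of_mem self_mem_nhdsWithin fun x hx => heq hx)
    exact tendsto_nhds_unique h1' h2
  -- the time derivative vanishes on the lateral boundary η = 0
  have hTau0 : ∀ τ ∈ Ico0 T, pdTau Q τ 0 = 0 := by
    intro τ hτ
    have hcongr : (fun s => Q s 0) =ᶠ[𝓝[Ici (0 : ℝ)] τ] fun _ => (0 : ℝ) :=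
      Filter.eventually_of_mem (aux_Ico0_mem_nhdsWithin hτ) fun s hs => hbc s hs
    have : pdTau Q τ 0 = derivWithin (fun _ : ℝ => (0 : ℝ)) (Ici 0) τ :=
      hcongr.derivWithin_eq (hbc τ hτ)
    rw [this]
    exact (hasDerivWithinAt_const τ (Ici (0:ℝ)) (0:ℝ)).derivWithin (uniqueDiffOn_Ici 0 τ hτ.1)
  -- part (ii)
  have part2 : ∀ τ ∈ Ico0 T, pdEta Q τ 0 = 1 / N τ + K 0 := by
    intro τ hτ
    have h0 : (0 : ℝ) ∈ Icc (0 : ℝ) 1 := ⟨le_refl _, zero_le_one⟩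
    have h := key τ hτ 0 h0
    rw [← hTau τ hτ 0 h0, ← hEta τ hτ 0 h0, hTau0 τ hτ, zero_add, hbc τ hτ] at h
    exact h
  -- Lipschitz estimate for K
  obtain ⟨C, hC⟩ := hK.bdd1
  have hKdiff : Differentiable ℝ K := hK.smooth.differentiable two_ne_zero
  have hLip : ∀ x y : ℝ, |K x - K y| ≤ C * |x - y| := by
    intro x y
    have := Convex.norm_image_sub_le_of_norm_deriv_le (f := K) (s := univ)
      (fun z _ => (hKdiff z)) (fun z _ => hC z) convex_univ (mem_univ y) (mem_univ x)
    simpa [Real.norm_eq_abs] using this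
  have hK0 : 0 < K 0 := hK.pos 0 ⟨le_refl _, hΦF.le⟩
  -- characteristic derivative
  have hchar : ∀ (c : ℝ) {s b : ℝ}, s < b →
      (∀ u ∈ Icc s b, u ∈ Ico0 T ∧ u + c ∈ Icc (0 : ℝ) 1) →
      HasDerivWithinAt (fun u => Q u (u + c)) (1 / N s + K (Q s (s + c))) (Ici s) s := by
    intro c s b hsb hmem
    have hsS := hmem s (left_mem_Icc.mpr hsb.le)
    have hmap : MapsTo (fun u : ℝ => ((u, u + c) : ℝ × ℝ)) (Icc s b) S := fun u hu =>
      ⟨(hmem u hu).1, (hmem u hu).2⟩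
    have hline : HasDerivWithinAt (fun u : ℝ => ((u, u + c) : ℝ × ℝ)) ((1 : ℝ), (1 : ℝ))
        (Icc s b) s :=
      HasDerivWithinAt.prodMk (hasDerivWithinAt_id _ _) ((hasDerivWithinAt_id _ _).add_const c)
    have h1 := (hQdiff (s, s + c) ⟨hsS.1, hsS.2⟩).comp_hasDerivWithinAt s hline hmap
    have h2 : HasDerivWithinAt (fun u => Q u (u + c)) (F (s, s + c) (1, 1)) (Ici s) s := by
      apply h1.mono_of_mem_nhdsWithin
      have : Icc s b = Ici s ∩ Iic b := (Ici_inter_Iic).symm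
      rw [this]
      exact Filter.inter_mem self_mem_nhdsWithin
        (mem_nhdsWithin_of_mem_nhds (Iic_mem_nhds hsb))
    have h3 : F (s, s + c) ((1 : ℝ), (1 : ℝ)) =
        F (s, s + c) (1, 0) + F (s, s + c) (0, 1) := by
      rw [← map_add]
      norm_num
    rw [h3, key s hsS.1 (s + c) hsS.2] at h2
    exact h2
  -- nonnegativity of Q
  have hQinit0 : Qinit 0 = 0 := by
    rw [← hinit 0 ⟨le_refl _, zero_le_one⟩]
    exact hbc 0 h0T
  have hQinit_nonneg : ∀ η ∈ Icc (0 : ℝ) 1, 0 ≤ Qinit η := fun η hη =>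
    hQinit0 ▸ hmono ⟨le_refl _, zero_le_one⟩ hη hη.1
  have hnonneg : ∀ τ ∈ Ico0 T, ∀ η ∈ Icc (0 : ℝ) 1, 0 ≤ Q τ η := by
    intro τ hτ η hη
    by_contra hcon
    push_neg at hcon
    set c := η - τ with hc
    set a := max (τ - η) 0 with ha
    set φ : ℝ → ℝ := fun u => Q u (u + c) with hφ
    have haτ : a ≤ τ := max_le (by linarith [hη.1]) hτ.1
    have hmemchar : ∀ u ∈ Icc a τ, u ∈ Ico0 T ∧ u + c ∈ Icc (0 : ℝ) 1 := by
      intro u hu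
      refine ⟨aux_mem_Ico0_of_le hτ (le_trans (le_max_right _ _) hu.1) hu.2, ?_, ?_⟩
      · have h1 : τ - η ≤ u := le_trans (le_max_left _ _) hu.1
        simp only [hc]; linarith
      · have h2 : u ≤ τ := hu.2
        simp only [hc]; linarith [hη.2]
    have hφτ : φ τ = Q τ η := by simp only [hφ, hc]; ring_nf
    have hφcont : ContinuousOn φ (Icc a τ) := by
      have hline : ContinuousOn (fun u : ℝ => ((u, u + c) : ℝ × ℝ)) (Icc a τ) :=
        (continuous_id.prodMk (continuous_id.add continuous_const)).continuousOn
      exact hQcont.comp hline fun u hu => ⟨(hmemchar u hu).1, (hmemchar u hu).2⟩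
    have hφa : 0 ≤ φ a := by
      rcases le_or_gt τ η with h | h
      · have ha0 : a = 0 := max_eq_right (by linarith)
        have h01 : η - τ ∈ Icc (0 : ℝ) 1 := ⟨by linarith, by linarith [hτ.1, hη.2]⟩
        have : φ a = Qinit (η - τ) := by
          rw [ha0]
          show Q 0 (0 + c) = Qinit (η - τ)
          rw [zero_add, hc, hinit _ h01]
        rw [this]
        exact hQinit_nonneg _ h01
      · have ha0 : a = τ - η := max_eq_left (by linarith)
        have : φ a = Q (τ - η) 0 := by
          rw [ha0]
          show Q (τ - η) (τ - η + c) = Q (τ - η) 0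
          rw [hc]; ring_nf
        rw [this, hbc _ (aux_mem_Ico0_of_le hτ (by linarith) (by linarith [hη.1]))]
    obtain ⟨s, hs, hs0, hsneg⟩ := aux_last_zero haτ hφcont hφa (by rwa [hφτ])
    have hφle : ∀ u ∈ Icc s τ, φ u ≤ 0 := by
      intro u hu
      rcases eq_or_lt_of_le hu.1 with rfl | hlt
      · exact hs0.le
      · exact (hsneg u ⟨hlt, hu.2⟩).le
    have hderiv : ∀ u ∈ Ico s τ, HasDerivWithinAt φ (1 / N u + K (φ u)) (Ici u) u := by
      intro u hu
      exact hchar c hu.2 fun w hw => hmemchar w ⟨le_trans (le_trans hs.1 hu.1) hw.1, hw.2⟩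
    have hgr := le_gronwallBound_of_liminf_deriv_right_le
      (f := fun u => -φ u) (f' := fun u => -(1 / N u + K (φ u))) (δ := 0) (K := C) (ε := 0)
      (a := s) (b := τ)
      (hφcont.neg.mono fun u hu => ⟨le_trans hs.1 hu.1, hu.2⟩)
      (fun u hu r hr => by
        simpa [slope_def_field, div_eq_inv_mul] using
          ((hderiv u hu).neg).liminf_right_slope_le hr)
      (by show -φ s ≤ 0; rw [hs0]; norm_num)
      (by
        intro u hu
        have huI : u ∈ Icc s τ := Ico_subset_Icc_self hu
        have hNu : 0 < N u := hNpos u (hmemchar u ⟨le_trans hs.1 huI.1, huI.2⟩).1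
        have hφu : φ u ≤ 0 := hφle u huI
        have := hLip (φ u) 0
        rw [sub_zero, abs_of_nonpos hφu] at this
        have hKφ : K 0 - C * (-φ u) ≤ K (φ u) := by
          have h1 : K 0 - K (φ u) ≤ |K (φ u) - K 0| := by
            rw [abs_sub_comm]; exact le_abs_self _
          linarith [this]
        have h1N : 0 < 1 / N u := by positivity
        nlinarith)
    have hfin := hgr τ (right_mem_Icc.mpr hs.2.le)
    rw [gronwallBound_ε0_δ0] at hfin
    have hfin' : -φ τ ≤ 0 := hfin
    rw [hφτ] at hfin'
    linarith
  -- part (i): monotonicity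
  have part1 : ∀ τ ∈ Ico0 T, MonotoneOn (Q τ) (Icc 0 1) := by
    intro τ hτ η₁ hη₁ η₂ hη₂ h12
    by_contra hcon
    push_neg at hcon
    set c₁ := η₁ - τ with hc₁
    set c₂ := η₂ - τ with hc₂
    set a := max (τ - η₁) 0 with ha
    set d : ℝ → ℝ := fun u => Q u (u + c₂) - Q u (u + c₁) with hd
    have haτ : a ≤ τ := max_le (by linarith [hη₁.1]) hτ.1
    have hmem1 : ∀ u ∈ Icc a τ, u ∈ Ico0 T ∧ u + c₁ ∈ Icc (0 : ℝ) 1 := by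
      intro u hu
      refine ⟨aux_mem_Ico0_of_le hτ (le_trans (le_max_right _ _) hu.1) hu.2, ?_, ?_⟩
      · have h1 : τ - η₁ ≤ u := le_trans (le_max_left _ _) hu.1
        simp only [hc₁]; linarith
      · have h2 : u ≤ τ := hu.2
        simp only [hc₁]; linarith [hη₁.2]
    have hmem2 : ∀ u ∈ Icc a τ, u ∈ Ico0 T ∧ u + c₂ ∈ Icc (0 : ℝ) 1 := by
      intro u hu
      refine ⟨aux_mem_Ico0_of_le hτ (le_trans (le_max_right _ _) hu.1) hu.2, ?_, ?_⟩
      · have h1 : τ - η₁ ≤ u := le_trans (le_max_left _ _) hu.1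
        simp only [hc₂]; linarith
      · have h2 : u ≤ τ := hu.2
        simp only [hc₂]; linarith [hη₂.2]
    have hdcont : ContinuousOn d (Icc a τ) := by
      have hl2 : ContinuousOn (fun u : ℝ => ((u, u + c₂) : ℝ × ℝ)) (Icc a τ) :=
        (continuous_id.prodMk (continuous_id.add continuous_const)).continuousOn
      have hl1 : ContinuousOn (fun u : ℝ => ((u, u + c₁) : ℝ × ℝ)) (Icc a τ) :=
        (continuous_id.prodMk (continuous_id.add continuous_const)).continuousOn
      exact (hQcont.comp hl2 fun u hu => ⟨(hmem2 u hu).1, (hmem2 u hu).2⟩).sub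
        (hQcont.comp hl1 fun u hu => ⟨(hmem1 u hu).1, (hmem1 u hu).2⟩)
    have hda : 0 ≤ d a := by
      rcases le_or_gt τ η₁ with h | h
      · have ha0 : a = 0 := max_eq_right (by linarith)
        have h1 : η₁ - τ ∈ Icc (0 : ℝ) 1 := ⟨by linarith, by linarith [hτ.1, hη₁.2]⟩
        have h2 : η₂ - τ ∈ Icc (0 : ℝ) 1 := ⟨by linarith, by linarith [hτ.1, hη₂.2]⟩
        have : d a = Qinit (η₂ - τ) - Qinit (η₁ - τ) := by
          rw [ha0]
          show Q 0 (0 + c₂) - Q 0 (0 + c₁) = _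
          rw [zero_add, zero_add, hc₁, hc₂, hinit _ h1, hinit _ h2]
        rw [this, sub_nonneg]
        exact hmono h1 h2 (by linarith)
      · have ha0 : a = τ - η₁ := max_eq_left (by linarith)
        have haT : a ∈ Ico0 T := aux_mem_Ico0_of_le hτ (le_max_right _ _) haτ
        have h21 : η₂ - η₁ ∈ Icc (0 : ℝ) 1 := ⟨by linarith, by linarith [hη₁.1, hη₂.2]⟩
        have : d a = Q a (η₂ - η₁) - Q a 0 := by
          rw [hd]
          simp only
          rw [ha0, hc₁, hc₂]
          ring_nf
        rw [this, hbc a haT, sub_zero]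
        exact hnonneg a haT _ h21
    have hdτ : d τ < 0 := by
      have : d τ = Q τ η₂ - Q τ η₁ := by
        rw [hd]; simp only; rw [hc₁, hc₂]; ring_nf
      rw [this]; linarith
    obtain ⟨s, hs, hs0, hsneg⟩ := aux_last_zero haτ hdcont hda hdτ
    have hderiv : ∀ u ∈ Ico s τ,
        HasDerivWithinAt d (K (Q u (u + c₂)) - K (Q u (u + c₁))) (Ici u) u := by
      intro u hu
      have h2 := hchar c₂ hu.2 fun w hw => hmem2 w ⟨le_trans (le_trans hs.1 hu.1) hw.1, hw.2⟩
      have h1 := hchar c₁ hu.2 fun w hw => hmem1 w ⟨le_trans (le_trans hs.1 hu.1) hw.1, hw.2⟩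
      have := h2.sub h1
      exact HasDerivWithinAt.congr_deriv this (by ring)
    have hgr := norm_le_gronwallBound_of_norm_deriv_right_le
      (f := d) (f' := fun u => K (Q u (u + c₂)) - K (Q u (u + c₁))) (δ := 0) (K := C) (ε := 0)
      (a := s) (b := τ)
      (hdcont.mono fun u hu => ⟨le_trans hs.1 hu.1, hu.2⟩)
      hderiv
      (by rw [hs0]; norm_num)
      (by
        intro u hu
        have := hLip (Q u (u + c₂)) (Q u (u + c₁))
        simpa [Real.norm_eq_abs, hd] using this)
    have hfin := hgr τ (right_mem_Icc.mpr hs.2.le)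
    rw [gronwallBound_ε0_δ0] at hfin
    have : d τ = 0 := by
      have := norm_nonneg (d τ)
      have habs : ‖d τ‖ = 0 := le_antisymm hfin this
      exact norm_eq_zero.mp habs
    linarith
  refine ⟨part1, part2, ?_⟩
  intro hNd τ hτ
  have h1 : (1 : ℝ) ∈ Icc (0 : ℝ) 1 := ⟨zero_le_one, le_refl _⟩
  have := hNd τ hτ
  have h2 := part2 τ hτ
  linarith
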